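/- arXiv:2010.01673 — 2 statements merged into one kernel-verified Lean document; each statement's English description precedes it below -/
import Mathlib

section
/- For every n ≥ 1, the (n+5)×(n+5) symmetric matrix Mₙ is congruent over ℚ to the diagonal matrix diag(-4, -7/4, 8/7, 9/8, 10/9, …, (n+10)/(n+9)); in particular its signature is n+1. -/
open Matrix Polynomial

/-- Entry function for the matrices Mₙ (0-indexed).  For indices `i, j < n + 5`
this reproduces the inductive family: the top-left 6×6 block is M₁ and each
extension appends a row/column vanishing except for a diagonal entry 2 and
entries -1 adjacent to the diagonal. -/
def Ment (i j : ℕ) : ℚ :=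
  if i = j then (if i = 0 then -4 else if i = 1 then -2 else if i = 2 then 0 else 2)
  else if i + 1 = j ∨ j + 1 = i then (if min i j = 1 then 1 else -1)
  else if (i = 0 ∧ j ≤ 2) ∨ (j = 0 ∧ i ≤ 2) then -1
  else 0

/-- The matrix Mₙ, of size (n+5) × (n+5). -/
def Mmat (n : ℕ) : Matrix (Fin (n + 5)) (Fin (n + 5)) ℚ :=
  fun i j => Ment i j

/-- The diagonal matrix diag(-4, -7/4, 8/7, 9/8, …, (n+10)/(n+9)). -/
def Dmat (n : ℕ) : Matrix (Fin (n + 5)) (Fin (n + 5)) ℚ :=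
  Matrix.diagonal fun k =>
    if (k : ℕ) = 0 then -4 else if (k : ℕ) = 1 then -7/4
    else ((k : ℚ) + 6) / ((k : ℚ) + 5)

/-- The signature of a real square matrix: number of positive eigenvalues minus
number of negative eigenvalues, counted with multiplicity as roots of the
characteristic polynomial. -/
noncomputable def matSig {m : ℕ} (A : Matrix (Fin m) (Fin m) ℝ) : ℤ :=
  (A.charpoly.roots.countP (fun x => 0 < x) : ℤ) -
    (A.charpoly.roots.countP (fun x => x < 0) : ℤ)

/-! ### Auxiliary entry functions -/

def dent (k : ℕ) : ℚ :=
  if k = 0 then -4 else if k = 1 then -7/4 else ((k : ℚ) + 6) / ((k : ℚ) + 5)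

def lent (i k : ℕ) : ℚ :=
  if i = k then 1
  else if k = 0 ∧ (i = 1 ∨ i = 2) then 1/4
  else if i = 2 ∧ k = 1 then -5/7
  else if i = k + 1 ∧ 2 ≤ k then -((k : ℚ) + 5) / ((k : ℚ) + 6)
  else 0

lemma lent_zero {i k : ℕ} (h : i < k) : lent i k = 0 := by
  unfold lent; split_ifs <;> first | rfl | omega | (exfalso; omega)

lemma lent_self (i : ℕ) : lent i i = 1 := by
  unfold lent; split_ifs <;> first | rfl | omega | (exfalso; omega)

lemma lent_succ {k : ℕ} (h : 2 ≤ k) : lent (k+1) k = -((k : ℚ) + 5) / ((k : ℚ) + 6) := by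
  unfold lent; split_ifs <;> first | rfl | omega | (exfalso; omega)

lemma lent_big {i k : ℕ} (h : k + 2 ≤ i) (h2 : ¬(k = 0 ∧ i = 2)) : lent i k = 0 := by
  unfold lent; split_ifs <;> first | rfl | omega | (exfalso; omega)

lemma dent_ge {k : ℕ} (h : 2 ≤ k) : dent k = ((k : ℚ) + 6) / ((k : ℚ) + 5) := by
  unfold dent; split_ifs <;> first | rfl | omega | (exfalso; omega)

lemma dent_ne (k : ℕ) : dent k ≠ 0 := by
  rcases Nat.lt_or_ge k 2 with h | h
  · interval_cases k <;> norm_num [dent]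
  · rw [dent_ge h]
    have h1 : ((k : ℚ) + 6) > 0 := by positivity
    have h2 : ((k : ℚ) + 5) > 0 := by positivity
    positivity

lemma dent_pos_iff (k : ℕ) : 0 < dent k ↔ 2 ≤ k := by
  constructor
  · intro h
    by_contra hc
    interval_cases k <;> norm_num [dent] at h
  · intro h
    rw [dent_ge h]
    have h1 : ((k : ℚ) + 6) > 0 := by positivity
    have h2 : ((k : ℚ) + 5) > 0 := by positivity
    positivity

lemma Ment_far {i j : ℕ} (h : j + 2 ≤ i) (h2 : ¬(j = 0 ∧ i ≤ 2)) : Ment i j = 0 := by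
  unfold Ment; split_ifs <;> first | rfl | omega | (exfalso; omega)

lemma Ment_diag3 {i : ℕ} (h : 3 ≤ i) : Ment i i = 2 := by
  unfold Ment; split_ifs <;> first | rfl | omega | (exfalso; omega)

lemma Ment_sub {j : ℕ} (h : 2 ≤ j) : Ment (j+1) j = -1 := by
  unfold Ment; split_ifs <;> first | rfl | omega | (exfalso; omega) | simp_all

lemma Ment_symm (i j : ℕ) : Ment i j = Ment j i := by
  unfold Ment
  split_ifs <;>
    first | rfl | omega | (simp_all [min_comm]) | (exfalso; omega)

/-! ### The key LDLᵀ identity, entrywise -/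

lemma key (N i j : ℕ) (hij : j ≤ i) (hi : i < N) :
    (∑ k ∈ Finset.range N, lent i k * dent k * lent j k) = Ment i j := by
  have hsub : (∑ k ∈ Finset.range N, lent i k * dent k * lent j k)
      = ∑ k ∈ Finset.range (j+1), lent i k * dent k * lent j k := by
    refine (Finset.sum_subset ?_ ?_).symm
    · intro k hk; simp only [Finset.mem_range] at hk ⊢; omega
    · intro k hk hk2
      simp only [Finset.mem_range] at hk hk2
      rw [lent_zero (show j < k by omega)]; ring
  rw [hsub]
  rcases j with _ | _ | _ | m
  · -- j = 0
    rw [Finset.sum_range_one, lent_self]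
    by_cases h0 : i = 0
    · subst h0; norm_num [lent, dent, Ment]
    by_cases h1 : i = 1
    · subst h1; norm_num [lent, dent, Ment]
    by_cases h2 : i = 2
    · subst h2; norm_num [lent, dent, Ment]
    · rw [lent_big (by omega) (by omega), Ment_far (by omega) (by omega)]; ring
  · -- j = 1
    rw [Finset.sum_range_succ, Finset.sum_range_one]
    by_cases h1 : i = 1
    · subst h1; norm_num [lent, dent, Ment]
    by_cases h2 : i = 2
    · subst h2; norm_num [lent, dent, Ment]
    · rw [lent_big (show 0+2 ≤ i by omega) (by omega),
        lent_big (show 1+2 ≤ i by omega) (by omega),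
        Ment_far (by omega) (by omega)]; ring
  · -- j = 2
    rw [Finset.sum_range_succ, Finset.sum_range_succ, Finset.sum_range_one]
    by_cases h2 : i = 2
    · subst h2; norm_num [lent, dent, Ment]
    by_cases h3 : i = 3
    · subst h3; norm_num [lent, dent, Ment]
    · rw [lent_big (show 0+2 ≤ i by omega) (by omega),
        lent_big (show 1+2 ≤ i by omega) (by omega),
        lent_big (show 2+2 ≤ i by omega) (by omega),
        Ment_far (by omega) (by omega)]; ring
  · -- j = m + 3
    rw [Finset.sum_range_succ, Finset.sum_range_succ]
    rw [Finset.sum_eq_zero (fun k hk => by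
      simp only [Finset.mem_range] at hk
      rw [lent_big (show k + 2 ≤ m + 3 by omega) (by omega)]; ring)]
    rw [zero_add, lent_self, lent_succ (show 2 ≤ m + 2 by omega),
      dent_ge (show 2 ≤ m + 2 by omega), dent_ge (show 2 ≤ m + 3 by omega)]
    have h7 : ((m:ℚ) + 7) ≠ 0 := by positivity
    have h8 : ((m:ℚ) + 8) ≠ 0 := by positivity
    have h9 : ((m:ℚ) + 9) ≠ 0 := by positivity
    by_cases hi3 : i = m + 3
    · subst hi3
      rw [lent_self, lent_succ (show 2 ≤ m + 2 by omega), Ment_diag3 (by omega)]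
      push_cast
      field_simp
      ring
    by_cases hi4 : i = m + 4
    · subst hi4
      rw [lent_big (show m + 2 + 2 ≤ m + 4 by omega) (by omega),
        show m + 4 = (m + 3) + 1 from rfl,
        lent_succ (show 2 ≤ m + 3 by omega), Ment_sub (by omega)]
      push_cast
      field_simp
      norm_num
    · rw [lent_big (show m + 2 + 2 ≤ i by omega) (by omega),
        lent_big (show m + 3 + 2 ≤ i by omega) (by omega),
        Ment_far (by omega) (by omega)]
      ring

/-! ### The matrix-level congruence over ℚ -/

lemma Dmat_eq (n : ℕ) : Dmat n = Matrix.diagonal (fun k : Fin (n+5) => dent k.val) := by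
  unfold Dmat dent
  congr 1

def Lma (n : ℕ) : Matrix (Fin (n+5)) (Fin (n+5)) ℚ := fun i k => lent i k

lemma factor (n : ℕ) : Mmat n = Lma n * Dmat n * (Lma n)ᵀ := by
  ext i j
  rw [Dmat_eq]
  rw [Matrix.mul_apply]
  simp only [Matrix.mul_diagonal, Matrix.transpose_apply, Lma, Mmat]
  rw [Fin.sum_univ_eq_sum_range (fun k => lent i k * dent k * lent j k) (n+5)]
  rcases le_total (j : ℕ) (i : ℕ) with h | h
  · exact (key (n+5) i j h i.isLt).symm
  · rw [Ment_symm]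
    rw [Finset.sum_congr rfl (fun k _ => show lent i k * dent k * lent j k
      = lent j k * dent k * lent i k by ring)]
    exact (key (n+5) j i h j.isLt).symm

lemma det_Lma (n : ℕ) : (Lma n).det = 1 := by
  rw [Matrix.det_of_lowerTriangular (Lma n)
    (fun i j hij => lent_zero (by exact hij))]
  simp [Lma, lent_self]

lemma congruent (n : ℕ) : ∃ P : Matrix (Fin (n + 5)) (Fin (n + 5)) ℚ,
    IsUnit P.det ∧ Dmat n = P * Mmat n * P.transpose := by
  have hu : IsUnit (Lma n).det := by rw [det_Lma]; exact isUnit_one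
  refine ⟨(Lma n)⁻¹, ?_, ?_⟩
  · rw [Matrix.det_nonsing_inv, det_Lma]; simp
  · rw [factor, Matrix.transpose_nonsing_inv]
    have hut : IsUnit ((Lma n)ᵀ).det := by rwa [Matrix.det_transpose]
    rw [show (Lma n)⁻¹ * (Lma n * Dmat n * (Lma n)ᵀ) * ((Lma n)ᵀ)⁻¹
        = ((Lma n)⁻¹ * Lma n) * Dmat n * ((Lma n)ᵀ * ((Lma n)ᵀ)⁻¹) by
      simp only [Matrix.mul_assoc]]
    rw [Matrix.nonsing_inv_mul _ hu, Matrix.mul_nonsing_inv _ hut, one_mul, mul_one]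

/-! ### Sylvester's law of inertia (the counting part we need) -/

lemma quadform {m : ℕ} (C : Matrix (Fin m) (Fin m) ℝ) (c : Fin m → ℝ) (x : Fin m → ℝ) :
    x ⬝ᵥ (C * diagonal c * Cᵀ).mulVec x = ∑ j, c j * (Cᵀ.mulVec x j)^2 := by
  have h1 : (C * diagonal c * Cᵀ).mulVec x
      = C.mulVec ((diagonal c).mulVec (Cᵀ.mulVec x)) := by
    rw [Matrix.mulVec_mulVec, Matrix.mulVec_mulVec]
  rw [h1, Matrix.dotProduct_mulVec]
  have h2 : x ᵥ* C = Cᵀ.mulVec x := (Matrix.mulVec_transpose C x).symm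
  rw [h2, dotProduct]
  refine Finset.sum_congr rfl fun j _ => ?_
  rw [Matrix.mulVec_diagonal]
  ring

lemma sylvester_le {m : ℕ} (C₁ C₂ : Matrix (Fin m) (Fin m) ℝ) (c₁ c₂ : Fin m → ℝ)
    (h₁ : IsUnit C₁.det)
    (hc₂ : ∀ j, c₂ j ≠ 0)
    (hA : C₁ * diagonal c₁ * C₁ᵀ = C₂ * diagonal c₂ * C₂ᵀ) :
    (Finset.univ.filter fun j => 0 < c₁ j).card
      ≤ (Finset.univ.filter fun j => 0 < c₂ j).card := by
  classical
  by_contra hcon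
  push_neg at hcon
  set S₁ := Finset.univ.filter fun j => 0 < c₁ j with hS₁
  set S₂ := Finset.univ.filter fun j => 0 < c₂ j with hS₂
  let ext : (↥S₁ → ℝ) →ₗ[ℝ] (Fin m → ℝ) :=
    { toFun := fun a j => if h : j ∈ S₁ then a ⟨j, h⟩ else 0
      map_add' := by
        intro a b; funext j; by_cases h : j ∈ S₁ <;> simp [h]
      map_smul' := by
        intro r a; funext j; by_cases h : j ∈ S₁ <;> simp [h] }
  let φ : (↥S₁ → ℝ) →ₗ[ℝ] (↥S₂ → ℝ) :=
    (LinearMap.funLeft ℝ ℝ (Subtype.val : ↥S₂ → Fin m)).comp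
      ((Matrix.mulVecLin (C₂ᵀ * (C₁ᵀ)⁻¹)).comp ext)
  have hninj : ¬ Function.Injective φ := by
    intro hinj
    have := LinearMap.finrank_le_finrank_of_injective hinj
    rw [Module.finrank_pi, Module.finrank_pi, Fintype.card_coe, Fintype.card_coe] at this
    omega
  obtain ⟨a, b, hab, hne⟩ : ∃ a b, φ a = φ b ∧ a ≠ b := by
    rw [Function.Injective] at hninj; push_neg at hninj
    obtain ⟨a, b, h, h2⟩ := hninj; exact ⟨a, b, h, h2⟩
  set d := a - b with hd
  have hdne : d ≠ 0 := sub_ne_zero_of_ne hne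
  have hφd : φ d = 0 := by rw [hd, map_sub, hab, sub_self]
  set v : Fin m → ℝ := ext d with hv
  set x : Fin m → ℝ := ((C₁ᵀ)⁻¹).mulVec v with hx
  have h₁t : IsUnit (C₁ᵀ).det := by rwa [Matrix.det_transpose]
  have fact1 : C₁ᵀ.mulVec x = v := by
    rw [hx, Matrix.mulVec_mulVec, Matrix.mul_nonsing_inv _ h₁t, Matrix.one_mulVec]
  set y : Fin m → ℝ := C₂ᵀ.mulVec x with hy
  have fact2 : ∀ j : ↥S₂, y j.val = 0 := by
    intro j
    have : φ d j = 0 := by rw [hφd]; rfl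
    simpa [φ, hy, hx, hv, Matrix.mulVec_transpose, LinearMap.funLeft, Matrix.mulVecLin, ← Matrix.mulVec_mulVec] using this
  set q : ℝ := x ⬝ᵥ (C₁ * diagonal c₁ * C₁ᵀ).mulVec x with hq
  have hpos : 0 < q := by
    rw [hq, quadform, fact1]
    obtain ⟨s, hs⟩ : ∃ s : ↥S₁, d s ≠ 0 := by
      by_contra hcon2; push_neg at hcon2
      exact hdne (funext hcon2)
    refine Finset.sum_pos' (fun j _ => ?_) ⟨s.val, Finset.mem_univ _, ?_⟩
    · by_cases h : j ∈ S₁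
      · have : 0 < c₁ j := (Finset.mem_filter.mp h).2
        positivity
      · simp [hv, ext, h]
    · have hmem : (s : Fin m) ∈ S₁ := s.2
      have hc : 0 < c₁ s.val := (Finset.mem_filter.mp hmem).2
      have hvs : v s.val = d s := by simp [hv, ext, hmem]
      rw [hvs]
      positivity
  have hnonpos : q ≤ 0 := by
    rw [hq, hA, quadform, ← hy]
    refine Finset.sum_nonpos fun j _ => ?_
    by_cases h : j ∈ S₂
    · rw [fact2 ⟨j, h⟩]; simp
    · have h1 : ¬ 0 < c₂ j := by
        intro hlt; exact h (Finset.mem_filter.mpr ⟨Finset.mem_univ _, hlt⟩)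
      have h2 : c₂ j < 0 := lt_of_le_of_ne (not_lt.mp h1) (hc₂ j)
      have : (y j)^2 ≥ 0 := sq_nonneg _
      nlinarith
  linarith

/-! ### Eigenvalues and the characteristic polynomial -/

lemma charpoly_conj {m : ℕ} (U B : Matrix (Fin m) (Fin m) ℝ) (hU : IsUnit U.det) :
    (U * B * U⁻¹).charpoly = B.charpoly := by
  unfold Matrix.charpoly
  have hmap : (U.map (C : ℝ →+* ℝ[X]) : Matrix _ _ ℝ[X]) * (U⁻¹).map C = 1 := by
    rw [← Matrix.map_mul, Matrix.mul_nonsing_inv _ hU]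
    simp
  have hcm : charmatrix (U * B * U⁻¹)
      = U.map (C : ℝ →+* ℝ[X]) * charmatrix B * (U⁻¹).map C := by
    unfold charmatrix
    rw [mul_sub, sub_mul]
    congr 1
    · rw [← (scalar_commute (X : ℝ[X]) (fun r => Commute.all _ _) (U.map C)).eq,
        mul_assoc, hmap, mul_one]
    · simp only [RingHom.mapMatrix_apply, ← Matrix.map_mul]
  have hmap2 : (U⁻¹.map (C : ℝ →+* ℝ[X]) : Matrix _ _ ℝ[X]) * U.map C = 1 := by
    rw [← Matrix.map_mul, Matrix.nonsing_inv_mul _ hU]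
    simp
  rw [hcm, det_mul, det_mul, mul_comm, ← mul_assoc, ← det_mul, hmap2, det_one, one_mul]

lemma charpoly_diag {m : ℕ} (c : Fin m → ℝ) :
    (diagonal c).charpoly = ∏ i, (X - C (c i)) := by
  unfold Matrix.charpoly
  have : charmatrix (diagonal c) = diagonal (fun i => (X : ℝ[X]) - C (c i)) := by
    ext i j
    by_cases h : i = j
    · subst h; simp [charmatrix_apply_eq]
    · rw [charmatrix_apply_ne _ _ _ h]
      simp [diagonal_apply_ne _ h]
  rw [this, det_diagonal]

lemma spectral {m : ℕ} (A : Matrix (Fin m) (Fin m) ℝ) (hA : A.IsHermitian) :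
    ∃ U : Matrix (Fin m) (Fin m) ℝ, IsUnit U.det ∧
      A = U * diagonal hA.eigenvalues * Uᵀ ∧ Uᵀ = U⁻¹ := by
  set U : Matrix (Fin m) (Fin m) ℝ := (hA.eigenvectorUnitary : Matrix (Fin m) (Fin m) ℝ)
  have hsu : star U * U = 1 := Matrix.mem_unitaryGroup_iff'.mp hA.eigenvectorUnitary.2
  have hus : U * star U = 1 := Matrix.mem_unitaryGroup_iff.mp hA.eigenvectorUnitary.2
  have hstar : star U = Uᵀ := by
    rw [Matrix.star_eq_conjTranspose, Matrix.conjTranspose_eq_transpose_of_trivial]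
  have hdet : IsUnit U.det := by
    apply IsUnit.of_mul_eq_one (star U).det
    rw [← det_mul, hus, det_one]
  refine ⟨U, hdet, ?_, ?_⟩
  · have := hA.spectral_theorem
    rwa [Unitary.conjStarAlgAut_apply, RCLike.ofReal_real_eq_id, Function.id_comp, hstar] at this
  · rw [← hstar]
    exact (Matrix.inv_eq_left_inv (by rw [hsu])).symm

lemma charpoly_roots_eq {m : ℕ} (A : Matrix (Fin m) (Fin m) ℝ) (hA : A.IsHermitian) :
    A.charpoly.roots = Multiset.map hA.eigenvalues Finset.univ.val := by
  obtain ⟨U, hdet, hspec, hinv⟩ := spectral A hA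
  have h1 : A.charpoly = (diagonal hA.eigenvalues).charpoly := by
    conv_lhs => rw [hspec, hinv]
    rw [charpoly_conj _ _ hdet]
  rw [h1, charpoly_diag, Finset.prod_eq_multiset_prod]
  have : Multiset.map (fun i => (X : ℝ[X]) - C (hA.eigenvalues i)) Finset.univ.val
      = Multiset.map (fun a => (X : ℝ[X]) - C a)
          (Multiset.map hA.eigenvalues Finset.univ.val) := by
    rw [Multiset.map_map]; rfl
  rw [this, roots_multiset_prod_X_sub_C]

/-! ### The main theorem -/

/-- For every n ≥ 1, Mₙ is congruent over ℚ to
diag(-4, -7/4, 8/7, …, (n+10)/(n+9)); in particular its signature is n + 1. -/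
theorem stmt2 (n : ℕ) (hn : 1 ≤ n) :
    (∃ P : Matrix (Fin (n + 5)) (Fin (n + 5)) ℚ,
      IsUnit P.det ∧ Dmat n = P * Mmat n * P.transpose) ∧
    matSig ((Mmat n).map (fun q : ℚ => (q : ℝ))) = n + 1 := by
  refine ⟨congruent n, ?_⟩
  -- real versions
  set f : ℚ →+* ℝ := Rat.castHom ℝ with hf
  rw [show (fun q : ℚ => (q : ℝ)) = ⇑f from rfl]
  set AR : Matrix (Fin (n+5)) (Fin (n+5)) ℝ := (Mmat n).map ⇑f with hAR
  set LR : Matrix (Fin (n+5)) (Fin (n+5)) ℝ := (Lma n).map ⇑f with hLR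
  set dR : Fin (n+5) → ℝ := fun k => ((dent k.val : ℚ) : ℝ) with hdR
  have hfactR : AR = LR * diagonal dR * LRᵀ := by
    rw [hAR, factor n, Dmat_eq, Matrix.map_mul, Matrix.map_mul, Matrix.transpose_map]
    congr 1
    rw [Matrix.diagonal_map (by simp)]
    rfl
  have hLRdet : IsUnit LR.det := by
    rw [hLR, ← RingHom.mapMatrix_apply f, ← RingHom.map_det, det_Lma]
    simp
  have hdRne : ∀ j, dR j ≠ 0 := by
    intro j
    simp only [hdR, ne_eq, Rat.cast_eq_zero]
    exact dent_ne _
  -- AR is symmetric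
  have hherm : AR.IsHermitian := by
    rw [Matrix.IsHermitian, Matrix.conjTranspose_eq_transpose_of_trivial]
    ext i j
    simp only [Matrix.transpose_apply, hAR, Matrix.map_apply, Mmat]
    rw [Ment_symm]
  set μ : Fin (n+5) → ℝ := hherm.eigenvalues with hμ
  obtain ⟨U, hUdet, hUspec, hUinv⟩ := spectral AR hherm
  -- positive eigenvalue count
  have hcard_d : (Finset.univ.filter fun j : Fin (n+5) => 0 < dR j).card = n + 3 := by
    have hset : (Finset.univ.filter fun j : Fin (n+5) => 0 < dR j)
        = Finset.univ.filter fun j : Fin (n+5) => 2 ≤ (j : ℕ) := by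
      refine Finset.filter_congr fun j _ => ?_
      simp only [hdR, Rat.cast_pos, eq_iff_iff]
      exact dent_pos_iff j.val
    rw [hset]
    have hsplit := Finset.card_filter_add_card_filter_not
      (s := (Finset.univ : Finset (Fin (n+5)))) (p := fun j : Fin (n+5) => 2 ≤ (j : ℕ))
    have hneg : (Finset.univ.filter fun j : Fin (n+5) => ¬ 2 ≤ (j : ℕ)).card = 2 := by
      have : (Finset.univ.filter fun j : Fin (n+5) => ¬ 2 ≤ (j : ℕ))
          = {(⟨0, by omega⟩ : Fin (n+5)), ⟨1, by omega⟩} := by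
        ext j
        simp only [Finset.mem_filter, Finset.mem_univ, true_and, Finset.mem_insert,
          Finset.mem_singleton, Fin.ext_iff]
        omega
      rw [this]
      rw [Finset.card_insert_of_notMem (by simp), Finset.card_singleton]
    rw [Finset.card_univ, Fintype.card_fin] at hsplit
    omega
  have hpos_card : (Finset.univ.filter fun i : Fin (n+5) => 0 < μ i).card = n + 3 := by
    have hle1 := sylvester_le U LR μ dR hUdet hdRne (by rw [← hUspec, ← hfactR])
    have hμne : ∀ i, μ i ≠ 0 := by
      have hdet : AR.det = ∏ i, μ i := hherm.det_eq_prod_eigenvalues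
      have hARdet : AR.det ≠ 0 := by
        rw [hfactR, det_mul, det_mul, det_diagonal, det_transpose]
        have : ∀ j ∈ (Finset.univ : Finset (Fin (n+5))), dR j ≠ 0 := fun j _ => hdRne j
        have hd : ∏ j, dR j ≠ 0 := Finset.prod_ne_zero_iff.mpr this
        intro hc
        rcases mul_eq_zero.mp hc with hc1 | hc2
        · rcases mul_eq_zero.mp hc1 with hc3 | hc4
          · exact hLRdet.ne_zero hc3
          · exact hd hc4
        · exact hLRdet.ne_zero hc2
      intro i hi
      apply hARdet
      rw [hdet]
      exact Finset.prod_eq_zero (Finset.mem_univ i) hi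
    have hle2 := sylvester_le LR U dR μ hLRdet hμne (by rw [← hUspec, ← hfactR])
    rw [hcard_d] at hle1 hle2
    omega
  -- negative eigenvalue count
  have hμne : ∀ i, μ i ≠ 0 := by
    have hdet : AR.det = ∏ i, μ i := hherm.det_eq_prod_eigenvalues
    have hARdet : AR.det ≠ 0 := by
      rw [hfactR, det_mul, det_mul, det_diagonal, det_transpose]
      have : ∀ j ∈ (Finset.univ : Finset (Fin (n+5))), dR j ≠ 0 := fun j _ => hdRne j
      have hd : ∏ j, dR j ≠ 0 := Finset.prod_ne_zero_iff.mpr this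
      intro hc
      rcases mul_eq_zero.mp hc with hc1 | hc2
      · rcases mul_eq_zero.mp hc1 with hc3 | hc4
        · exact hLRdet.ne_zero hc3
        · exact hd hc4
      · exact hLRdet.ne_zero hc2
    intro i hi
    apply hARdet
    rw [hherm.det_eq_prod_eigenvalues]
    exact Finset.prod_eq_zero (Finset.mem_univ i) hi
  have hneg_card : (Finset.univ.filter fun i : Fin (n+5) => μ i < 0).card = 2 := by
    have hswap : (Finset.univ.filter fun i : Fin (n+5) => μ i < 0)
        = Finset.univ.filter fun i : Fin (n+5) => ¬ 0 < μ i := by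
      refine Finset.filter_congr fun i _ => ?_
      have := hμne i
      constructor
      · intro h; exact not_lt.mpr (le_of_lt h)
      · intro h; exact lt_of_le_of_ne (not_lt.mp h) (hμne i)
    have hsplit := Finset.card_filter_add_card_filter_not
      (s := (Finset.univ : Finset (Fin (n+5)))) (p := fun i : Fin (n+5) => 0 < μ i)
    rw [Finset.card_univ, Fintype.card_fin, hpos_card] at hsplit
    rw [hswap]
    omega
  -- conclude
  unfold matSig
  rw [charpoly_roots_eq AR hherm]
  rw [Multiset.countP_map, Multiset.countP_map]
  have e1 : (Multiset.filter (fun a => 0 < μ a) Finset.univ.val).card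
      = (Finset.univ.filter fun i : Fin (n+5) => 0 < μ i).card := rfl
  have e2 : (Multiset.filter (fun a => μ a < 0) Finset.univ.val).card
      = (Finset.univ.filter fun i : Fin (n+5) => μ i < 0).card := rfl
  rw [e1, e2, hpos_card, hneg_card]
  push_cast
  ring
end

section
/- In the braid group B₃ on three strands with generators σ₁, σ₂ satisfying σ₁σ₂σ₁ = σ₂σ₁σ₂, for every n ≥ 1 the braid word βₙ = σ₁^{-(2n+3)} σ₂ σ₁³ σ₂ is conjugate to the braid word Aₙ = (σ₁σ₂)³ σ₁ σ₂^{-(2n+5)}. -/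
/-- The braid relation σ₁σ₂σ₁ = σ₂σ₁σ₂ for the braid group B₃,
presented on two generators. -/
def braidRel : Set (FreeGroup (Fin 2)) :=
  {FreeGroup.of 0 * FreeGroup.of 1 * FreeGroup.of 0 *
    (FreeGroup.of 1 * FreeGroup.of 0 * FreeGroup.of 1)⁻¹}

/-- The braid group B₃ = ⟨σ₁, σ₂ | σ₁σ₂σ₁ = σ₂σ₁σ₂⟩. -/
abbrev B3 := PresentedGroup braidRel

/-- The standard generators σ₁ (= σ 0) and σ₂ (= σ 1). -/
def σ (i : Fin 2) : B3 := PresentedGroup.of i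

/-- βₙ = σ₁^{-(2n+3)} σ₂ σ₁³ σ₂. -/
def β (n : ℕ) : B3 :=
  (σ 0) ^ (-(2 * (n : ℤ) + 3)) * σ 1 * (σ 0) ^ (3 : ℕ) * σ 1

/-- Aₙ = (σ₁σ₂)³ σ₁ σ₂^{-(2n+5)}. -/
def A (n : ℕ) : B3 :=
  (σ 0 * σ 1) ^ (3 : ℕ) * σ 0 * (σ 1) ^ (-(2 * (n : ℤ) + 5))

/-- The defining braid relation holds in B₃. -/
lemma braid_rel : σ 0 * σ 1 * σ 0 = σ 1 * σ 0 * σ 1 := by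
  have h : (QuotientGroup.mk (FreeGroup.of 0 * FreeGroup.of 1 * FreeGroup.of 0 *
      (FreeGroup.of 1 * FreeGroup.of 0 * FreeGroup.of 1)⁻¹ : FreeGroup (Fin 2)) : B3) = 1 := by
    apply (QuotientGroup.eq_one_iff _).mpr
    exact Subgroup.subset_normalClosure (by simp [braidRel])
  simp only [QuotientGroup.mk_mul, QuotientGroup.mk_inv] at h
  rw [mul_inv_eq_one] at h
  exact h

/-- The key conjugation identity, in an arbitrary group with elements a, b
satisfying the braid relation. -/
theorem braid_conj {G : Type*} [Group G] (a b : G) (r : a * b * a = b * a * b) (m : ℤ) :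
    a ^ (-m) * b * a ^ (3:ℕ) * b =
      (a ^ (-m) * (a*b*a)⁻¹ * b⁻¹) * ((a*b) ^ (3:ℕ) * a * b ^ (-(m+2))) *
        (a ^ (-m) * (a*b*a)⁻¹ * b⁻¹)⁻¹ := by
  have h1 : SemiconjBy (a*b*a) a b := by
    show (a*b*a) * a = b * (a*b*a)
    rw [show b*(a*b*a) = b*a*b*a by group, ← r]
  have h2 : SemiconjBy (a*b*a) b a := by
    show (a*b*a) * b = a * (a*b*a)
    rw [show (a*b*a)*b = a*(b*a*b) by group, ← r]
  have hA1 : ∀ k : ℤ, (a*b*a) * a ^ k = b ^ k * (a*b*a) := fun k => (h1.zpow_right k).eq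
  have hB1 : ∀ k : ℤ, (a*b*a) * b ^ k = a ^ k * (a*b*a) := fun k => (h2.zpow_right k).eq
  have hc : ∀ k : ℤ, a ^ k * ((a*b*a)*(a*b*a)) = (a*b*a)*(a*b*a) * a ^ k := by
    intro k
    calc a ^ k * ((a*b*a)*(a*b*a)) = (a ^ k * (a*b*a)) * (a*b*a) := by group
    _ = ((a*b*a) * b ^ k) * (a*b*a) := by rw [hB1 k]
    _ = (a*b*a) * (b ^ k * (a*b*a)) := by group
    _ = (a*b*a) * ((a*b*a) * a ^ k) := by rw [← hA1 k]
    _ = (a*b*a)*(a*b*a) * a ^ k := by group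
  have key : a * b * (a * (a * (a * b * a))) = (a*b*a)*(a*b*a) * b := by
    calc a * b * (a * (a * (a * b * a))) = a * b * (a * (a * (b * a * b))) := by rw [r]
    _ = a * b * a * (a * b * a) * b := by group
    _ = a * b * a * (b * a * b) * b := by rw [r]
    _ = (a*b*a)*(a*b*a) * b := by rw [← r]
  have key2 : b * (a * (a * (a * b))) = (a*b*a)*(a*b*a) * a⁻¹ * b * a⁻¹ := by
    calc b * (a * (a * (a * b)))
        = a ^ (-1:ℤ) * (a * b * (a * (a * (a * b * a)))) * a ^ (-1:ℤ) := by group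
    _ = a ^ (-1:ℤ) * ((a*b*a)*(a*b*a) * b) * a ^ (-1:ℤ) := by rw [key]
    _ = a ^ (-1:ℤ) * ((a*b*a)*(a*b*a)) * (b * a ^ (-1:ℤ)) := by group
    _ = (a*b*a)*(a*b*a) * a ^ (-1:ℤ) * (b * a ^ (-1:ℤ)) := by rw [hc (-1)]
    _ = (a*b*a)*(a*b*a) * a⁻¹ * b * a⁻¹ := by group
  have t1 : b ^ (-(m+2)) * b * (a*b*a) = (a*b*a) * a ^ (-(m+1)) := by
    calc b ^ (-(m+2)) * b * (a*b*a) = b ^ (-(m+1)) * (a*b*a) := by group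
    _ = (a*b*a) * a ^ (-(m+1)) := by rw [hA1 (-(m+1))]
  have t2 : b ^ (-1:ℤ) * ((a*b*a) * (a*b*a)) = (a*b*a) * (a*b*a) * b ^ (-1:ℤ) := by
    calc b ^ (-1:ℤ) * ((a*b*a) * (a*b*a)) = (b ^ (-1:ℤ) * (a*b*a)) * (a*b*a) := by group
    _ = ((a*b*a) * a ^ (-1:ℤ)) * (a*b*a) := by rw [hA1 (-1)]
    _ = (a*b*a) * (a ^ (-1:ℤ) * (a*b*a)) := by group
    _ = (a*b*a) * ((a*b*a) * b ^ (-1:ℤ)) := by rw [← hB1 (-1)]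
    _ = (a*b*a) * (a*b*a) * b ^ (-1:ℤ) := by group
  have t3 : b ^ (-1:ℤ) * (a * (a*b*a)) = (a*b*a) * (a⁻¹ * b) := by
    calc b ^ (-1:ℤ) * (a * (a*b*a)) = b ^ (-1:ℤ) * ((a*b*a) * b) := by rw [← h2.eq]
    _ = (b ^ (-1:ℤ) * (a*b*a)) * b := by group
    _ = ((a*b*a) * a ^ (-1:ℤ)) * b := by rw [hA1 (-1)]
    _ = (a*b*a) * (a⁻¹ * b) := by group
  have E1 : a ^ (-m) * b * (a * a * a) * b
      = (a*b*a)*(a*b*a) * a ^ (-m) * (a⁻¹ * b * a⁻¹) := by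
    calc a ^ (-m) * b * (a * a * a) * b
        = a ^ (-m) * (b * (a * (a * (a * b)))) := by group
      _ = a ^ (-m) * ((a*b*a)*(a*b*a) * a⁻¹ * b * a⁻¹) := by rw [key2]
      _ = a ^ (-m) * ((a*b*a)*(a*b*a)) * (a⁻¹ * b * a⁻¹) := by group
      _ = (a*b*a)*(a*b*a) * a ^ (-m) * (a⁻¹ * b * a⁻¹) := by rw [hc (-m)]
  have hab3 : a * b * (a * b) * (a * b) = (a*b*a)*(a*b*a) := by
    rw [show a*b*(a*b)*(a*b) = a*b*a*(b*a*b) by group, ← r]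
  have E2 : a ^ (-m) * (a*b*a)⁻¹ * b⁻¹ * (a * b * (a * b) * (a * b) * a * b ^ (-(m+2))) *
        (a ^ (-m) * (a*b*a)⁻¹ * b⁻¹)⁻¹
      = (a*b*a)*(a*b*a) * a ^ (-m) * (a⁻¹ * b * a⁻¹) := by
    calc a ^ (-m) * (a*b*a)⁻¹ * b⁻¹ * (a * b * (a * b) * (a * b) * a * b ^ (-(m+2))) *
          (a ^ (-m) * (a*b*a)⁻¹ * b⁻¹)⁻¹
        = a ^ (-m) * (a*b*a)⁻¹ * b⁻¹ * ((a*b*a)*(a*b*a) * a * b ^ (-(m+2))) *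
          (a ^ (-m) * (a*b*a)⁻¹ * b⁻¹)⁻¹ := by rw [hab3]
      _ = a ^ (-m) * (a*b*a)⁻¹ * (b ^ (-1:ℤ) * ((a*b*a)*(a*b*a))) *
            (a * (b ^ (-(m+2)) * b * (a*b*a))) * a ^ m := by group
      _ = a ^ (-m) * (a*b*a)⁻¹ * ((a*b*a)*(a*b*a) * b ^ (-1:ℤ)) *
            (a * ((a*b*a) * a ^ (-(m+1)))) * a ^ m := by rw [t1, t2]
      _ = a ^ (-m) * (a*b*a) * (b ^ (-1:ℤ) * (a * (a*b*a))) * (a ^ (-(m+1)) * a ^ m) := by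
            group
      _ = a ^ (-m) * (a*b*a) * ((a*b*a) * (a⁻¹ * b)) * (a ^ (-(m+1)) * a ^ m) := by rw [t3]
      _ = a ^ (-m) * ((a*b*a)*(a*b*a)) * (a⁻¹ * b * a⁻¹) := by group
      _ = (a*b*a)*(a*b*a) * a ^ (-m) * (a⁻¹ * b * a⁻¹) := by rw [hc (-m)]
  simp only [pow_succ, pow_zero, one_mul]
  exact E1.trans E2.symm


/-- For every n ≥ 1, βₙ is conjugate to Aₙ in B₃. -/
theorem stmt4 (n : ℕ) (hn : 1 ≤ n) : ∃ w : B3, β n = w * A n * w⁻¹ := by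
  refine ⟨σ 0 ^ (-(2 * (n : ℤ) + 3)) * (σ 0 * σ 1 * σ 0)⁻¹ * (σ 1)⁻¹, ?_⟩
  have h := braid_conj (σ 0) (σ 1) braid_rel (2 * (n : ℤ) + 3)
  rw [β, A]
  rw [show -(2 * (n : ℤ) + 5) = -((2 * (n : ℤ) + 3) + 2) by ring]
  exact h
end
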